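/- arXiv:2004.12680 — 2 statements merged into one kernel-verified Lean document; each statement's English description precedes it below -/
import Mathlib

section
/- For every probability distribution μ on ℕ, the statistic Φ_m(μ̂_m) = (1/√m)·‖μ̂_m‖_{1/2}^{1/2} computed from an i.i.d. sample X_1, X_2, ... ~ μ converges to 0 both in L¹ and almost surely as m → ∞. -/
open scoped BigOperators

/-- The empirical measure induced by a sample `x` of size `m`:
`μ̂_m(i) = (1/m) ∑_t 1{x_t = i}`. -/
noncomputable def empMeas (m : ℕ) (x : Fin m → ℕ) (i : ℕ) : ℝ :=
  ((Finset.univ.filter (fun t => x t = i)).card : ℝ) / m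

/-- Total variation distance `(1/2) ∑_i |μ(i) - ν(i)|`. -/
noncomputable def tvDist (μ ν : ℕ → ℝ) : ℝ := (1 / 2) * ∑' i, |μ i - ν i|

/-- `Φ_m(ν) = (1/√m) ∑_j √(ν j)`. -/
noncomputable def Phi (m : ℕ) (ν : ℕ → ℝ) : ℝ :=
  (1 / Real.sqrt m) * ∑' j, Real.sqrt (ν j)

/-- `μ` is a probability distribution on ℕ. -/
def IsProb (μ : ℕ → ℝ) : Prop := (∀ i, 0 ≤ μ i) ∧ ∑' i, μ i = 1

/-- Probability of the event `A` under the i.i.d. product `μ^m`. -/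
noncomputable def probOf (μ : ℕ → ℝ) (m : ℕ) (A : Set (Fin m → ℕ)) : ℝ :=
  ∑' x : Fin m → ℕ, Set.indicator A (fun y => ∏ t, μ (y t)) x

/-- Expectation of `f` under the i.i.d. product `μ^m`. -/
noncomputable def expect (μ : ℕ → ℝ) (m : ℕ) (f : (Fin m → ℕ) → ℝ) : ℝ :=
  ∑' x : Fin m → ℕ, (∏ t, μ (x t)) * f x

/-- Empirical Rademacher complexity of the class of all boolean functions on ℕ,
conditional on the sample `x`:
`R̂_m(x) = E_σ [ sup_{f : ℕ → {0,1}} (1/m) ∑_t σ_t f(x_t) ]`,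
with `σ` uniform on `{-1,1}^m`. -/
noncomputable def empRad (m : ℕ) (x : Fin m → ℕ) : ℝ :=
  (1 / 2 ^ m) * ∑ σ : Fin m → Bool,
    sSup (Set.range (fun f : ℕ → Bool =>
      (1 / (m : ℝ)) * ∑ t, (if σ t then (1 : ℝ) else -1) * (if f (x t) then (1 : ℝ) else 0)))

/-- `Λ_m(μ) = ∑_{j : μ(j) < 1/m} μ(j) + (1/(2√m)) ∑_{j : μ(j) ≥ 1/m} √(μ(j))`. -/
noncomputable def Lam (m : ℕ) (μ : ℕ → ℝ) : ℝ :=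
  (∑' j, Set.indicator {j | μ j < 1 / (m : ℝ)} μ j)
    + (1 / (2 * Real.sqrt m)) *
      ∑' j, Set.indicator {j | 1 / (m : ℝ) ≤ μ j} (fun j => Real.sqrt (μ j)) j

/-- The half-norm `‖ν‖_{1/2} = (∑_i √(ν i))²`. -/
noncomputable def hfnrm (ν : ℕ → ℝ) : ℝ := (∑' i, Real.sqrt (ν i)) ^ 2

/-- `T_μ(η)` with respect to a non-increasing rearrangement `π` of `μ`:
the least `t` such that the tail mass beyond the `t` largest atoms is `< η`
(ranks are 0-indexed). -/
noncomputable def truncT (μ : ℕ → ℝ) (π : ℕ ≃ ℕ) (η : ℝ) : ℕ :=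
  sInf {t : ℕ | ∑' i, μ (π (i + t)) < η}

/-- The truncation `μ[η]`: keep only the `T_μ(η)` largest atoms of `μ`
(as ranked by the non-increasing rearrangement `π`). -/
noncomputable def trunc (μ : ℕ → ℝ) (π : ℕ ≃ ℕ) (η : ℝ) (i : ℕ) : ℝ :=
  Set.indicator {i | π.symm i < truncT μ π η} μ i

open MeasureTheory

open Filter
open scoped ENNReal

set_option linter.unusedSectionVars false

lemma tsum_pi_prod : ∀ (m : ℕ) (f : Fin m → ℕ → ℝ≥0∞),
    ∑' x : Fin m → ℕ, ∏ t, f t (x t) = ∏ t, ∑' k, f t k := by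
  intro m
  induction m with
  | zero =>
      intro f
      rw [tsum_eq_single (fun t : Fin 0 => (t.elim0 : ℕ))]
      · simp
      · intro b hb; exact absurd (funext fun t => t.elim0) hb
  | succ n ih =>
      intro f
      rw [← (Fin.consEquiv (fun _ : Fin (n+1) => ℕ)).tsum_eq, Fin.prod_univ_succ]
      have h : ∀ p : ℕ × (Fin n → ℕ),
          (∏ t : Fin (n+1), f t ((Fin.consEquiv (fun _ : Fin (n+1) => ℕ)) p t))
            = f 0 p.1 * ∏ i : Fin n, f i.succ (p.2 i) := by
        intro p
        rw [Fin.prod_univ_succ]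
        simp [Fin.consEquiv]
      rw [tsum_congr h, ENNReal.tsum_prod']
      simp_rw [ENNReal.tsum_mul_left, ENNReal.tsum_mul_right]
      rw [ih (fun i => f i.succ)]


lemma tsum_W (ν : ℕ → ℝ≥0∞) (hν : ∑' k, ν k = 1) (m : ℕ) :
    ∑' x : Fin m → ℕ, ∏ t, ν (x t) = 1 := by
  rw [tsum_pi_prod]; simp [hν]

lemma tsum_W_one (ν : ℕ → ℝ≥0∞) (hν : ∑' k, ν k = 1) (m : ℕ) (s : Fin m) (g : ℕ → ℝ≥0∞) :
    ∑' x : Fin m → ℕ, (∏ t, ν (x t)) * g (x s) = ∑' k, ν k * g k := by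
  set f : Fin m → ℕ → ℝ≥0∞ := Function.update (fun _ => ν) s (fun k => ν k * g k) with hf
  have key := tsum_pi_prod m f
  have h1 : ∀ x : Fin m → ℕ,
      (∏ t, f t (x t)) = (∏ t, ν (x t)) * g (x s) := by
    intro x
    have : (fun t => f t (x t))
        = Function.update (fun t => ν (x t)) s (ν (x s) * g (x s)) := by
      funext t
      rcases eq_or_ne t s with rfl | hts
      · simp [hf]
      · simp [hf, Function.update_of_ne hts]
    rw [this, Finset.prod_update_of_mem (Finset.mem_univ s)]
    simp only [← Finset.erase_eq]
    rw [← Finset.mul_prod_erase Finset.univ (fun t => ν (x t)) (Finset.mem_univ s)]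
    ring
  have h2 : (∏ t : Fin m, ∑' k, f t k) = ∑' k, ν k * g k := by
    have : (fun t : Fin m => ∑' k, f t k)
        = Function.update (fun _ : Fin m => (1 : ℝ≥0∞)) s (∑' k, ν k * g k) := by
      funext t
      rcases eq_or_ne t s with rfl | hts
      · simp [hf]
      · simp [hf, Function.update_of_ne hts, hν]
    rw [this, Finset.prod_update_of_mem (Finset.mem_univ s)]
    simp
  rw [← tsum_congr h1, key, h2]

lemma tsum_W_two (ν : ℕ → ℝ≥0∞) (hν : ∑' k, ν k = 1) (m : ℕ) (s u : Fin m) (hsu : s ≠ u)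
    (g h : ℕ → ℝ≥0∞) :
    ∑' x : Fin m → ℕ, (∏ t, ν (x t)) * g (x s) * h (x u)
      = (∑' k, ν k * g k) * (∑' k, ν k * h k) := by
  set f : Fin m → ℕ → ℝ≥0∞ :=
    Function.update (Function.update (fun _ => ν) u (fun k => ν k * h k)) s (fun k => ν k * g k)
    with hf
  have key := tsum_pi_prod m f
  have hus : u ∈ Finset.univ.erase s := Finset.mem_erase.2 ⟨hsu.symm, Finset.mem_univ u⟩
  have h1 : ∀ x : Fin m → ℕ,
      (∏ t, f t (x t)) = (∏ t, ν (x t)) * g (x s) * h (x u) := by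
    intro x
    have : (fun t => f t (x t))
        = Function.update (Function.update (fun t => ν (x t)) u (ν (x u) * h (x u))) s
            (ν (x s) * g (x s)) := by
      funext t
      rcases eq_or_ne t s with rfl | hts
      · simp [hf]
      · rcases eq_or_ne t u with rfl | htu
        · simp [hf, Function.update_of_ne hts]
        · simp [hf, Function.update_of_ne hts, Function.update_of_ne htu]
    rw [this, Finset.prod_update_of_mem (Finset.mem_univ s)]
    simp only [← Finset.erase_eq]
    rw [Finset.prod_update_of_mem hus]
    simp only [← Finset.erase_eq]
    rw [← Finset.mul_prod_erase Finset.univ (fun t => ν (x t)) (Finset.mem_univ s),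
        ← Finset.mul_prod_erase _ (fun t => ν (x t)) hus]
    ring
  have h2 : (∏ t : Fin m, ∑' k, f t k)
      = (∑' k, ν k * g k) * (∑' k, ν k * h k) := by
    have : (fun t : Fin m => ∑' k, f t k)
        = Function.update (Function.update (fun _ : Fin m => (1 : ℝ≥0∞)) u
            (∑' k, ν k * h k)) s (∑' k, ν k * g k) := by
      funext t
      rcases eq_or_ne t s with rfl | hts
      · simp [hf]
      · rcases eq_or_ne t u with rfl | htu
        · simp [hf, Function.update_of_ne hts]
        · simp [hf, Function.update_of_ne hts, Function.update_of_ne htu, hν]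
    rw [this, Finset.prod_update_of_mem (Finset.mem_univ s)]
    simp only [← Finset.erase_eq]
    rw [Finset.prod_update_of_mem hus]
    simp
  rw [← tsum_congr h1, key, h2]

lemma tsum_ofReal_transfer {α : Type*} {f : α → ℝ} (h0 : ∀ a, 0 ≤ f a)
    (hfin : ∑' a, ENNReal.ofReal (f a) ≠ ∞) :
    Summable f ∧ ∑' a, f a = (∑' a, ENNReal.ofReal (f a)).toReal := by
  have hs : Summable f := by
    have := ENNReal.summable_toReal hfin
    simpa [ENNReal.toReal_ofReal (h0 _)] using this
  refine ⟨hs, ?_⟩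
  rw [ENNReal.tsum_toReal_eq (fun a => ENNReal.ofReal_ne_top)]
  exact tsum_congr fun a => (ENNReal.toReal_ofReal (h0 a)).symm

section real_marginals
variable {μ : ℕ → ℝ}

lemma musummable (hsum : ∑' i, μ i = 1) : Summable μ := by
  by_contra h
  rw [tsum_eq_zero_of_not_summable h] at hsum
  norm_num at hsum

lemma nu_sum_one (hpos : ∀ i, 0 ≤ μ i) (hsum : ∑' i, μ i = 1) : ∑' k, ENNReal.ofReal (μ k) = 1 := by
  rw [← ENNReal.ofReal_tsum_of_nonneg hpos (musummable hsum), hsum, ENNReal.ofReal_one]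

lemma W_eq (hpos : ∀ i, 0 ≤ μ i) (m : ℕ) (x : Fin m → ℕ) :
    ∏ t, ENNReal.ofReal (μ (x t)) = ENNReal.ofReal (∏ t, μ (x t)) := by
  rw [← ENNReal.ofReal_prod_of_nonneg (fun t _ => hpos (x t))]

lemma real_W (hpos : ∀ i, 0 ≤ μ i) (hsum : ∑' i, μ i = 1) : Summable (fun x : Fin m → ℕ => ∏ t, μ (x t)) ∧
    ∑' x : Fin m → ℕ, ∏ t, μ (x t) = 1 := by
  have h0 : ∀ x : Fin m → ℕ, 0 ≤ ∏ t, μ (x t) :=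
    fun x => Finset.prod_nonneg fun t _ => hpos (x t)
  have he : ∑' x : Fin m → ℕ, ENNReal.ofReal (∏ t, μ (x t)) = 1 := by
    rw [tsum_congr fun x => (W_eq hpos m x).symm]
    exact tsum_W _ (nu_sum_one hpos hsum) m
  have := tsum_ofReal_transfer h0 (by rw [he]; exact ENNReal.one_ne_top)
  exact ⟨this.1, by rw [this.2, he, ENNReal.toReal_one]⟩

lemma real_one (hpos : ∀ i, 0 ≤ μ i) (hsum : ∑' i, μ i = 1) (m : ℕ) (s : Fin m) (g : ℕ → ℝ) (hg0 : ∀ k, 0 ≤ g k) (hg1 : ∀ k, g k ≤ 1) :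
    Summable (fun x : Fin m → ℕ => (∏ t, μ (x t)) * g (x s)) ∧
    ∑' x : Fin m → ℕ, (∏ t, μ (x t)) * g (x s) = ∑' k, μ k * g k := by
  have hgs : Summable (fun k => μ k * g k) :=
    (musummable hsum).of_nonneg_of_le (fun k => mul_nonneg (hpos k) (hg0 k))
      (fun k => by nlinarith [hpos k, hg0 k, hg1 k])
  have hR : ∑' k, ENNReal.ofReal (μ k * g k) = ENNReal.ofReal (∑' k, μ k * g k) :=
    (ENNReal.ofReal_tsum_of_nonneg (fun k => mul_nonneg (hpos k) (hg0 k)) hgs).symm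
  have he : ∑' x : Fin m → ℕ, ENNReal.ofReal ((∏ t, μ (x t)) * g (x s))
      = ENNReal.ofReal (∑' k, μ k * g k) := by
    rw [tsum_congr (fun x : Fin m → ℕ => by
      rw [ENNReal.ofReal_mul (Finset.prod_nonneg fun t _ => hpos (x t)),
        ← W_eq hpos m x] :
      ∀ x : Fin m → ℕ, ENNReal.ofReal ((∏ t, μ (x t)) * g (x s))
        = (∏ t, ENNReal.ofReal (μ (x t))) * ENNReal.ofReal (g (x s)))]
    rw [tsum_W_one (fun k => ENNReal.ofReal (μ k)) (nu_sum_one hpos hsum) m s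
      (fun k => ENNReal.ofReal (g k)), ← hR]
    exact tsum_congr fun k => (ENNReal.ofReal_mul (hpos k)).symm
  have h0 : ∀ x : Fin m → ℕ, 0 ≤ (∏ t, μ (x t)) * g (x s) :=
    fun x => mul_nonneg (Finset.prod_nonneg fun t _ => hpos (x t)) (hg0 _)
  have := tsum_ofReal_transfer h0 (by rw [he]; exact ENNReal.ofReal_ne_top)
  exact ⟨this.1, by rw [this.2, he, ENNReal.toReal_ofReal (tsum_nonneg
    fun k => mul_nonneg (hpos k) (hg0 k))]⟩

lemma real_two (hpos : ∀ i, 0 ≤ μ i) (hsum : ∑' i, μ i = 1) (m : ℕ) (s u : Fin m) (hsu : s ≠ u) (g h : ℕ → ℝ)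
    (hg0 : ∀ k, 0 ≤ g k) (hg1 : ∀ k, g k ≤ 1) (hh0 : ∀ k, 0 ≤ h k) (hh1 : ∀ k, h k ≤ 1) :
    Summable (fun x : Fin m → ℕ => (∏ t, μ (x t)) * g (x s) * h (x u)) ∧
    ∑' x : Fin m → ℕ, (∏ t, μ (x t)) * g (x s) * h (x u)
      = (∑' k, μ k * g k) * (∑' k, μ k * h k) := by
  have hgs : Summable (fun k => μ k * g k) :=
    (musummable hsum).of_nonneg_of_le (fun k => mul_nonneg (hpos k) (hg0 k))
      (fun k => by nlinarith [hpos k, hg0 k, hg1 k])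
  have hhs : Summable (fun k => μ k * h k) :=
    (musummable hsum).of_nonneg_of_le (fun k => mul_nonneg (hpos k) (hh0 k))
      (fun k => by nlinarith [hpos k, hh0 k, hh1 k])
  have he : ∑' x : Fin m → ℕ, ENNReal.ofReal ((∏ t, μ (x t)) * g (x s) * h (x u))
      = ENNReal.ofReal ((∑' k, μ k * g k) * (∑' k, μ k * h k)) := by
    rw [tsum_congr (fun x : Fin m → ℕ => by
      rw [ENNReal.ofReal_mul (mul_nonneg (Finset.prod_nonneg fun t _ => hpos (x t)) (hg0 _)),
        ENNReal.ofReal_mul (Finset.prod_nonneg fun t _ => hpos (x t)),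
        ← W_eq hpos m x] :
      ∀ x : Fin m → ℕ, ENNReal.ofReal ((∏ t, μ (x t)) * g (x s) * h (x u))
        = (∏ t, ENNReal.ofReal (μ (x t))) * ENNReal.ofReal (g (x s))
            * ENNReal.ofReal (h (x u)))]
    rw [tsum_W_two (fun k => ENNReal.ofReal (μ k)) (nu_sum_one hpos hsum) m s u hsu
      (fun k => ENNReal.ofReal (g k)) (fun k => ENNReal.ofReal (h k))]
    rw [ENNReal.ofReal_mul (tsum_nonneg fun k => mul_nonneg (hpos k) (hg0 k)),
      ENNReal.ofReal_tsum_of_nonneg (fun k => mul_nonneg (hpos k) (hg0 k)) hgs,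
      ENNReal.ofReal_tsum_of_nonneg (fun k => mul_nonneg (hpos k) (hh0 k)) hhs]
    rw [tsum_congr fun k => (ENNReal.ofReal_mul (hpos k)).symm,
      tsum_congr fun k => (ENNReal.ofReal_mul (hpos k)).symm]
  have h0 : ∀ x : Fin m → ℕ, 0 ≤ (∏ t, μ (x t)) * g (x s) * h (x u) :=
    fun x => mul_nonneg (mul_nonneg (Finset.prod_nonneg fun t _ => hpos (x t)) (hg0 _)) (hh0 _)
  have := tsum_ofReal_transfer h0 (by rw [he]; exact ENNReal.ofReal_ne_top)
  exact ⟨this.1, by rw [this.2, he, ENNReal.toReal_ofReal (mul_nonneg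
    (tsum_nonneg fun k => mul_nonneg (hpos k) (hg0 k))
    (tsum_nonneg fun k => mul_nonneg (hpos k) (hh0 k)))]⟩

end real_marginals

lemma Phi_nonneg (m : ℕ) (x : Fin m → ℕ) : 0 ≤ Phi m (empMeas m x) :=
  mul_nonneg (by positivity) (tsum_nonneg fun j => Real.sqrt_nonneg _)

lemma Phi_le (m : ℕ) (hm : 1 ≤ m) (x : Fin m → ℕ) (J : ℕ) :
    Phi m (empMeas m x) ≤ (J : ℝ) / Real.sqrt m
      + (∑ t, (if J ≤ x t then (1 : ℝ) else 0)) / m := by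
  classical
  have hm0 : (0 : ℝ) < m := by exact_mod_cast hm
  set s : Finset ℕ := Finset.image x Finset.univ with hs
  set c : ℕ → ℕ := fun j => (Finset.univ.filter (fun t => x t = j)).card with hc
  have hzero : ∀ j ∉ s, Real.sqrt (empMeas m x j) = 0 := by
    intro j hj
    have : (Finset.univ.filter (fun t => x t = j)) = ∅ := by
      apply Finset.filter_eq_empty_iff.2
      intro t _
      intro h
      exact hj (Finset.mem_image.2 ⟨t, Finset.mem_univ t, h⟩)
    simp [empMeas, this]
  have htsum : ∑' j, Real.sqrt (empMeas m x j) = ∑ j ∈ s, Real.sqrt (empMeas m x j) :=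
    tsum_eq_sum hzero
  rw [Phi, htsum, ← Finset.sum_filter_add_sum_filter_not s (fun j => j < J), mul_add]
  have hcm : ∀ j, (c j : ℝ) ≤ m := by
    intro j
    exact_mod_cast Finset.card_le_card (Finset.filter_subset _ _) |>.trans
      (le_of_eq (Finset.card_univ.trans (Fintype.card_fin m)))
  gcongr
  · -- low part
    have h1 : ∀ j ∈ s.filter (fun j => j < J), Real.sqrt (empMeas m x j) ≤ 1 := by
      intro j _
      apply Real.sqrt_le_one.mpr
      rw [empMeas, div_le_one hm0]
      exact hcm j
    calc (1 / Real.sqrt m) * ∑ j ∈ s.filter (fun j => j < J), Real.sqrt (empMeas m x j)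
        ≤ (1 / Real.sqrt m) * ((s.filter (fun j => j < J)).card : ℝ) := by
          apply mul_le_mul_of_nonneg_left ?_ (by positivity)
          calc ∑ j ∈ s.filter (fun j => j < J), Real.sqrt (empMeas m x j)
              ≤ ∑ _j ∈ s.filter (fun j => j < J), (1 : ℝ) := Finset.sum_le_sum h1
            _ = ((s.filter (fun j => j < J)).card : ℝ) := by simp
      _ ≤ (1 / Real.sqrt m) * (J : ℝ) := by
          apply mul_le_mul_of_nonneg_left ?_ (by positivity)
          have : s.filter (fun j => j < J) ⊆ Finset.range J := by
            intro j hj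
            exact Finset.mem_range.2 (Finset.mem_filter.1 hj).2
          exact_mod_cast (Finset.card_le_card this).trans_eq (Finset.card_range J)
      _ = (J : ℝ) / Real.sqrt m := by ring
  · -- high part
    have key : ∀ j ∈ s.filter (fun j => ¬ j < J),
        (1 / Real.sqrt m) * Real.sqrt (empMeas m x j) ≤ (c j : ℝ) / m := by
      intro j _
      rw [empMeas, Real.sqrt_div (by positivity) (m : ℝ)]
      rw [one_div, inv_mul_eq_div, div_div, Real.mul_self_sqrt (le_of_lt hm0)]
      gcongr
      show Real.sqrt ((c j : ℕ) : ℝ) ≤ ((c j : ℕ) : ℝ)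
      rcases Nat.eq_zero_or_pos (c j) with h | h
      · rw [h]; simp
      · have h1 : (1 : ℝ) ≤ (c j : ℝ) := by exact_mod_cast h
        nlinarith [Real.sq_sqrt (by positivity : (0:ℝ) ≤ (c j : ℝ)),
          Real.sqrt_nonneg ((c j : ℝ))]
    calc (1 / Real.sqrt m) * ∑ j ∈ s.filter (fun j => ¬ j < J), Real.sqrt (empMeas m x j)
        = ∑ j ∈ s.filter (fun j => ¬ j < J),
            (1 / Real.sqrt m) * Real.sqrt (empMeas m x j) := Finset.mul_sum _ _ _
      _ ≤ ∑ j ∈ s.filter (fun j => ¬ j < J), (c j : ℝ) / m := Finset.sum_le_sum key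
      _ = (∑ j ∈ s.filter (fun j => ¬ j < J), (c j : ℝ)) / m := by
          rw [Finset.sum_div]
      _ ≤ (∑ t, (if J ≤ x t then (1 : ℝ) else 0)) / m := by
          gcongr ?_ / m
          have hcount : ((Finset.univ.filter (fun t : Fin m => J ≤ x t)).card : ℝ)
              = ∑ t, (if J ≤ x t then (1 : ℝ) else 0) := by
            rw [Finset.card_filter]
            push_cast
            rfl
          rw [← hcount]
          have hfib := Finset.card_eq_sum_card_fiberwise
            (f := x) (s := Finset.univ.filter (fun t : Fin m => J ≤ x t))
            (t := s.filter (fun j => ¬ j < J))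
            (by
              intro t ht
              rcases Finset.mem_filter.1 ht with ⟨_, hJ⟩
              exact Finset.mem_filter.2 ⟨Finset.mem_image.2 ⟨t, Finset.mem_univ t, rfl⟩,
                by omega⟩)
          have : ∀ j ∈ s.filter (fun j => ¬ j < J),
              ((Finset.univ.filter (fun t : Fin m => J ≤ x t)).filter
                (fun t => x t = j)).card = c j := by
            intro j hj
            rcases Finset.mem_filter.1 hj with ⟨_, hJ⟩
            congr 1
            ext t
            simp only [Finset.mem_filter, Finset.mem_univ, true_and]
            constructor
            · rintro ⟨_, h2⟩; exact h2
            · intro h2; exact ⟨by omega, h2⟩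
          rw [hfib]
          push_cast
          exact Finset.sum_le_sum fun j hj => le_of_eq (by rw [this j hj])

noncomputable def chiJ (J : ℕ) : ℕ → ℝ := fun k => if J ≤ k then 1 else 0
noncomputable def tailP (μ : ℕ → ℝ) (J : ℕ) : ℝ := ∑' k, μ k * chiJ J k

lemma chiJ_nonneg (J k : ℕ) : 0 ≤ chiJ J k := by unfold chiJ; positivity
lemma chiJ_le_one (J k : ℕ) : chiJ J k ≤ 1 := by unfold chiJ; split <;> norm_num
lemma chiJ_idem (J k : ℕ) : chiJ J k * chiJ J k = chiJ J k := by unfold chiJ; split <;> norm_num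

section var
variable {μ : ℕ → ℝ} (hpos : ∀ i, 0 ≤ μ i) (hsum : ∑' i, μ i = 1) (J : ℕ)
include hpos hsum

lemma tailP_nonneg : 0 ≤ tailP μ J :=
  tsum_nonneg fun k => mul_nonneg (hpos k) (chiJ_nonneg J k)

lemma tailP_le_one : tailP μ J ≤ 1 := by
  have h1 : Summable (fun k => μ k * chiJ J k) :=
    (musummable hsum).of_nonneg_of_le (fun k => mul_nonneg (hpos k) (chiJ_nonneg J k))
      (fun k => by nlinarith [hpos k, chiJ_nonneg J k, chiJ_le_one J k])
  calc tailP μ J ≤ ∑' k, μ k := Summable.tsum_le_tsum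
        (fun k => by nlinarith [hpos k, chiJ_nonneg J k, chiJ_le_one J k]) h1 (musummable hsum)
    _ = 1 := hsum

/-- Mean: `∑' x, w x * N x = m * p`. -/
lemma mean_N (m : ℕ) :
    Summable (fun x : Fin m → ℕ => (∏ t, μ (x t)) * (∑ t, chiJ J (x t))) ∧
    ∑' x : Fin m → ℕ, (∏ t, μ (x t)) * (∑ t, chiJ J (x t)) = m * tailP μ J := by
  have hre : (fun x : Fin m → ℕ => (∏ t, μ (x t)) * (∑ t, chiJ J (x t)))
      = fun x => ∑ s : Fin m, (∏ t, μ (x t)) * chiJ J (x s) := by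
    funext x; rw [Finset.mul_sum]
  have hsummand : ∀ s : Fin m, Summable (fun x : Fin m → ℕ => (∏ t, μ (x t)) * chiJ J (x s)) :=
    fun s => (real_one hpos hsum m s _ (chiJ_nonneg J) (chiJ_le_one J)).1
  constructor
  · rw [hre]; exact summable_sum (fun s _ => hsummand s)
  · rw [hre, Summable.tsum_finsetSum (fun s _ => hsummand s)]
    rw [Finset.sum_congr rfl (fun s _ => (real_one hpos hsum m s _
      (chiJ_nonneg J) (chiJ_le_one J)).2)]
    simp [tailP, Finset.card_univ, mul_comm]

lemma sq_N (m : ℕ) :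
    Summable (fun x : Fin m → ℕ => (∏ t, μ (x t)) * (∑ t, chiJ J (x t)) ^ 2) ∧
    ∑' x : Fin m → ℕ, (∏ t, μ (x t)) * (∑ t, chiJ J (x t)) ^ 2
      = m * tailP μ J + (m^2 - m) * (tailP μ J)^2 := by
  have hre : (fun x : Fin m → ℕ => (∏ t, μ (x t)) * (∑ t, chiJ J (x t)) ^ 2)
      = fun x => ∑ s : Fin m, ∑ u : Fin m, (∏ t, μ (x t)) * chiJ J (x s) * chiJ J (x u) := by
    funext x
    rw [sq, Finset.sum_mul_sum]
    rw [Finset.mul_sum]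
    refine Finset.sum_congr rfl fun s _ => ?_
    rw [Finset.mul_sum]
    refine Finset.sum_congr rfl fun u _ => ?_
    ring
  have hsummand : ∀ s u : Fin m,
      Summable (fun x : Fin m → ℕ => (∏ t, μ (x t)) * chiJ J (x s) * chiJ J (x u)) := by
    intro s u
    rcases eq_or_ne s u with rfl | hsu
    · have : (fun x : Fin m → ℕ => (∏ t, μ (x t)) * chiJ J (x s) * chiJ J (x s))
          = fun x => (∏ t, μ (x t)) * chiJ J (x s) := by
        funext x; rw [mul_assoc, chiJ_idem]
      rw [this]
      exact (real_one hpos hsum m s _ (chiJ_nonneg J) (chiJ_le_one J)).1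
    · exact (real_two hpos hsum m s u hsu _ _ (chiJ_nonneg J) (chiJ_le_one J)
        (chiJ_nonneg J) (chiJ_le_one J)).1
  have hval : ∀ s u : Fin m,
      ∑' x : Fin m → ℕ, (∏ t, μ (x t)) * chiJ J (x s) * chiJ J (x u)
        = if s = u then tailP μ J else (tailP μ J)^2 := by
    intro s u
    rcases eq_or_ne s u with rfl | hsu
    · have : (fun x : Fin m → ℕ => (∏ t, μ (x t)) * chiJ J (x s) * chiJ J (x s))
          = fun x => (∏ t, μ (x t)) * chiJ J (x s) := by
        funext x; rw [mul_assoc, chiJ_idem]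
      rw [this, if_pos rfl]
      exact (real_one hpos hsum m s _ (chiJ_nonneg J) (chiJ_le_one J)).2
    · rw [if_neg hsu, sq]
      exact (real_two hpos hsum m s u hsu _ _ (chiJ_nonneg J) (chiJ_le_one J)
        (chiJ_nonneg J) (chiJ_le_one J)).2
  constructor
  · rw [hre]
    exact summable_sum (fun s _ => summable_sum (fun u _ => hsummand s u))
  · rw [hre, Summable.tsum_finsetSum (fun s _ => summable_sum (fun u _ => hsummand s u))]
    have : ∀ s : Fin m, ∑' x : Fin m → ℕ,
        ∑ u : Fin m, (∏ t, μ (x t)) * chiJ J (x s) * chiJ J (x u)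
        = ∑ u : Fin m, if s = u then tailP μ J else (tailP μ J)^2 := by
      intro s
      rw [Summable.tsum_finsetSum (fun u _ => hsummand s u)]
      exact Finset.sum_congr rfl fun u _ => hval s u
    rw [Finset.sum_congr rfl fun s _ => this s]
    have hinner : ∀ s : Fin m,
        (∑ u : Fin m, if s = u then tailP μ J else (tailP μ J)^2)
          = tailP μ J + (m - 1) * (tailP μ J)^2 := by
      intro s
      have hsplit : ∀ u : Fin m, (if s = u then tailP μ J else tailP μ J ^ 2)
          = tailP μ J ^ 2 + (if s = u then tailP μ J - tailP μ J ^ 2 else 0) := by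
        intro u; split <;> ring
      rw [Finset.sum_congr rfl fun u _ => hsplit u, Finset.sum_add_distrib,
        Finset.sum_const, Finset.sum_ite_eq Finset.univ s, if_pos (Finset.mem_univ s),
        Finset.card_univ, Fintype.card_fin, nsmul_eq_mul]
      ring
    rw [Finset.sum_congr rfl fun s _ => hinner s, Finset.sum_const,
      Finset.card_univ, Fintype.card_fin, nsmul_eq_mul]
    ring
end var
section var2
variable {μ : ℕ → ℝ} (hpos : ∀ i, 0 ≤ μ i) (hsum : ∑' i, μ i = 1) (J : ℕ)
include hpos hsum

lemma var_N (m : ℕ) :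
    Summable (fun x : Fin m → ℕ =>
      (∏ t, μ (x t)) * ((∑ t, chiJ J (x t)) - m * tailP μ J) ^ 2) ∧
    ∑' x : Fin m → ℕ,
      (∏ t, μ (x t)) * ((∑ t, chiJ J (x t)) - m * tailP μ J) ^ 2 ≤ m := by
  set p := tailP μ J with hp
  have hw := real_W hpos hsum (m := m)
  have hN := mean_N hpos hsum J m
  have hN2 := sq_N hpos hsum J m
  have expand : ∀ x : Fin m → ℕ,
      (∏ t, μ (x t)) * ((∑ t, chiJ J (x t)) - m * p) ^ 2
      = ((∏ t, μ (x t)) * (∑ t, chiJ J (x t)) ^ 2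
          - (2 * m * p) * ((∏ t, μ (x t)) * (∑ t, chiJ J (x t))))
        + (m * p) ^ 2 * (∏ t, μ (x t)) := by
    intro x; ring
  have hsummR : Summable (fun x : Fin m → ℕ =>
      ((∏ t, μ (x t)) * (∑ t, chiJ J (x t)) ^ 2
          - (2 * m * p) * ((∏ t, μ (x t)) * (∑ t, chiJ J (x t))))
        + (m * p) ^ 2 * (∏ t, μ (x t))) :=
    (hN2.1.sub (hN.1.mul_left _)).add (hw.1.mul_left _)
  have hsummL : Summable (fun x : Fin m → ℕ =>
      (∏ t, μ (x t)) * ((∑ t, chiJ J (x t)) - m * p) ^ 2) := by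
    exact (summable_congr fun x => (expand x)).2 hsummR
  refine ⟨hsummL, ?_⟩
  rw [tsum_congr expand,
    Summable.tsum_add (hN2.1.sub (hN.1.mul_left _)) (hw.1.mul_left _),
    Summable.tsum_sub hN2.1 (hN.1.mul_left _), tsum_mul_left, tsum_mul_left,
    hN2.2, hN.2, hw.2]
  have hp0 : 0 ≤ p := tailP_nonneg hpos hsum J
  have hp1 : p ≤ 1 := tailP_le_one hpos hsum J
  have hm0 : (0:ℝ) ≤ m := Nat.cast_nonneg m
  nlinarith [sq_nonneg ((m:ℝ) * p)]

lemma cheb (m : ℕ) (hm : 1 ≤ m) (ε : ℝ) (hε : 0 < ε) :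
    ∑' y : {y : Fin m → ℕ // ε ≤ |(∑ t, chiJ J (y t)) / m - tailP μ J|},
      (∏ t, μ (y.1 t)) ≤ 1 / (ε ^ 2 * m) := by
  set p := tailP μ J with hp
  have hm0 : (0:ℝ) < m := by exact_mod_cast hm
  have hvar := var_N hpos hsum J m
  have hw := real_W hpos hsum (m := m)
  set A : Set (Fin m → ℕ) := {y | ε ≤ |(∑ t, chiJ J (y t)) / m - p|} with hA
  set g : (Fin m → ℕ) → ℝ := fun y =>
    ((∏ t, μ (y t)) * ((∑ t, chiJ J (y t)) - m * p) ^ 2) * (1 / (ε * m) ^ 2) with hg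
  have hgsumm : Summable g := hvar.1.mul_right _
  have hgnn : ∀ y, 0 ≤ g y := by
    intro y
    apply mul_nonneg (mul_nonneg (Finset.prod_nonneg fun t _ => hpos (y t)) (sq_nonneg _))
    positivity
  have hwnn : ∀ y : Fin m → ℕ, 0 ≤ ∏ t, μ (y t) := fun y => Finset.prod_nonneg fun t _ => hpos (y t)
  have step1 : ∀ y : A, (∏ t, μ (y.1 t)) ≤ g y.1 := by
    rintro ⟨y, hy⟩
    have h1 : ε * m ≤ |(∑ t, chiJ J (y t)) - m * p| := by
      have : |(∑ t, chiJ J (y t)) - m * p| = m * |(∑ t, chiJ J (y t)) / m - p| := by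
        rw [← abs_of_pos hm0, ← abs_mul]
        congr 1
        field_simp
        rw [abs_of_pos hm0]; ring
      rw [this]
      calc ε * m = m * ε := mul_comm _ _
        _ ≤ m * |(∑ t, chiJ J (y t)) / m - p| := by
            exact mul_le_mul_of_nonneg_left hy (le_of_lt hm0)
    have h2 : (ε * m) ^ 2 ≤ ((∑ t, chiJ J (y t)) - m * p) ^ 2 := by
      rw [← sq_abs ((∑ t, chiJ J (y t)) - m * p)]
      apply pow_le_pow_left₀ (by positivity) h1
    have h3 : (1:ℝ) ≤ ((∑ t, chiJ J (y t)) - m * p) ^ 2 * (1 / (ε * m) ^ 2) := by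
      rw [mul_one_div, le_div_iff₀ (by positivity), one_mul]
      exact h2
    calc (∏ t, μ (y t)) = (∏ t, μ (y t)) * 1 := (mul_one _).symm
      _ ≤ (∏ t, μ (y t)) * (((∑ t, chiJ J (y t)) - m * p) ^ 2 * (1 / (ε * m) ^ 2)) :=
          mul_le_mul_of_nonneg_left h3 (hwnn y)
      _ = g y := by rw [hg]; ring
  calc ∑' y : A, (∏ t, μ (y.1 t))
      ≤ ∑' y : A, g y.1 := Summable.tsum_le_tsum step1 (hw.1.subtype A) (hgsumm.subtype A)
    _ ≤ ∑' y, g y := Summable.tsum_subtype_le g A hgnn hgsumm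
    _ = (∑' y : Fin m → ℕ, (∏ t, μ (y t)) * ((∑ t, chiJ J (y t)) - m * p) ^ 2)
          * (1 / (ε * m) ^ 2) := tsum_mul_right
    _ ≤ m * (1 / (ε * m) ^ 2) := by
        apply mul_le_mul_of_nonneg_right hvar.2 (by positivity)
    _ = 1 / (ε ^ 2 * m) := by field_simp
end var2

lemma measure_pre (μ : ℕ → ℝ) (P : Measure (ℕ → ℕ))
    (hcyl : ∀ (m : ℕ) (y : Fin m → ℕ),
      P {ω | ∀ t : Fin m, ω (t : ℕ) = y t} = ENNReal.ofReal (∏ t, μ (y t)))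
    (m : ℕ) (A : Set (Fin m → ℕ)) :
    P ((fun ω => fun t : Fin m => ω (t : ℕ)) ⁻¹' A)
      = ∑' y : A, ENNReal.ofReal (∏ t, μ (y.1 t)) := by
  have hpre : ((fun ω => fun t : Fin m => ω (t : ℕ)) ⁻¹' A)
      = ⋃ y : A, {ω : ℕ → ℕ | ∀ t : Fin m, ω (t : ℕ) = y.1 t} := by
    ext ω
    simp only [Set.mem_preimage, Set.mem_iUnion]
    constructor
    · intro h
      exact ⟨⟨fun t => ω (t : ℕ), h⟩, fun t => rfl⟩
    · rintro ⟨y, hy⟩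
      have : (fun t : Fin m => ω (t : ℕ)) = y.1 := funext hy
      rw [this]; exact y.2
  have hmeas : ∀ y : A, MeasurableSet {ω : ℕ → ℕ | ∀ t : Fin m, ω (t : ℕ) = y.1 t} := by
    intro y
    have : {ω : ℕ → ℕ | ∀ t : Fin m, ω (t : ℕ) = y.1 t}
        = ⋂ t : Fin m, (fun ω : ℕ → ℕ => ω (t : ℕ)) ⁻¹' {y.1 t} := by
      ext ω; simp [Set.mem_iInter]
    rw [this]
    exact MeasurableSet.iInter fun t =>
      (measurable_pi_apply (t : ℕ)) (measurableSet_singleton _)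
  have hdisj : Pairwise (Function.onFun Disjoint
      (fun y : A => {ω : ℕ → ℕ | ∀ t : Fin m, ω (t : ℕ) = y.1 t})) := by
    intro y y' hyy'
    rw [Function.onFun, Set.disjoint_left]
    intro ω hω hω'
    apply hyy'
    apply Subtype.ext
    funext t
    rw [← hω t, ← hω' t]
  rw [hpre, measure_iUnion hdisj hmeas]
  exact tsum_congr fun y => hcyl m y.1

lemma P_event_le (μ : ℕ → ℝ) (hpos : ∀ i, 0 ≤ μ i) (hsum : ∑' i, μ i = 1)
    (P : Measure (ℕ → ℕ))
    (hcyl : ∀ (m : ℕ) (y : Fin m → ℕ),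
      P {ω | ∀ t : Fin m, ω (t : ℕ) = y t} = ENNReal.ofReal (∏ t, μ (y t)))
    (J m : ℕ) (hm : 1 ≤ m) (ε : ℝ) (hε : 0 < ε) :
    P ((fun ω => fun t : Fin m => ω (t : ℕ)) ⁻¹'
        {y : Fin m → ℕ | ε ≤ |(∑ t, chiJ J (y t)) / (m : ℝ) - tailP μ J|})
      ≤ ENNReal.ofReal (1 / (ε ^ 2 * m)) := by
  rw [measure_pre μ P hcyl]
  have hwnn : ∀ y : Fin m → ℕ, 0 ≤ ∏ t, μ (y t) :=
    fun y => Finset.prod_nonneg fun t _ => hpos (y t)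
  have hconv := (ENNReal.ofReal_tsum_of_nonneg
    (f := fun y : {y : Fin m → ℕ | ε ≤ |(∑ t, chiJ J (y t)) / (m : ℝ) - tailP μ J|} =>
      ∏ t, μ (y.1 t))
    (fun y => hwnn y.1) ((real_W hpos hsum).1.subtype _))
  rw [← hconv]
  exact ENNReal.ofReal_le_ofReal (cheb hpos hsum J m hm ε hε)

lemma bc_step (μ : ℕ → ℝ) (hpos : ∀ i, 0 ≤ μ i) (hsum : ∑' i, μ i = 1)
    (P : Measure (ℕ → ℕ)) (hP : IsProbabilityMeasure P)
    (hcyl : ∀ (m : ℕ) (y : Fin m → ℕ),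
      P {ω | ∀ t : Fin m, ω (t : ℕ) = y t} = ENNReal.ofReal (∏ t, μ (y t)))
    (J : ℕ) (ε : ℝ) (hε : 0 < ε) :
    ∀ᵐ ω ∂P, ∀ᶠ n : ℕ in atTop,
      |(∑ t : Fin ((n+1)^2), chiJ J (ω (t : ℕ))) / (((n+1)^2 : ℕ) : ℝ) - tailP μ J| < ε := by
  set s : ℕ → Set (ℕ → ℕ) := fun n =>
    (fun ω => fun t : Fin ((n+1)^2) => ω (t : ℕ)) ⁻¹'
      {y : Fin ((n+1)^2) → ℕ | ε ≤ |(∑ t, chiJ J (y t)) / (((n+1)^2 : ℕ) : ℝ) - tailP μ J|}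
    with hs
  have hPs : ∀ n, P (s n) ≤ ENNReal.ofReal (1 / (ε ^ 2 * ((n+1)^2 : ℕ))) := fun n =>
    P_event_le μ hpos hsum P hcyl J ((n+1)^2)
      (Nat.one_le_iff_ne_zero.2 (by positivity)) ε hε
  have hsummb : Summable (fun n : ℕ => 1 / (ε ^ 2 * ((n+1)^2 : ℕ))) := by
    have h2 : Summable (fun n : ℕ => 1 / ((n : ℝ)) ^ 2) :=
      Real.summable_one_div_nat_pow.2 one_lt_two
    have h3 : Summable (fun n : ℕ => 1 / (((n+1) : ℝ)) ^ 2) := by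
      exact_mod_cast (summable_nat_add_iff 1).2 h2
    apply Summable.congr (h3.mul_left (1 / ε^2))
    intro n
    push_cast
    field_simp
  have htop : ∑' n, P (s n) ≠ ∞ := by
    apply ne_top_of_le_ne_top ?_ (ENNReal.tsum_le_tsum hPs)
    rw [← ENNReal.ofReal_tsum_of_nonneg (fun n => by positivity) hsummb]
    exact ENNReal.ofReal_ne_top
  filter_upwards [ae_eventually_notMem htop] with ω hω
  filter_upwards [hω] with n hn
  rw [hs] at hn
  simp only [Set.mem_preimage, Set.mem_setOf_eq, not_le] at hn
  exact hn

lemma chiJ_eq_ite (J k : ℕ) : chiJ J k = if J ≤ k then (1:ℝ) else 0 := rfl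

lemma tailP_tendsto {μ : ℕ → ℝ} (hpos : ∀ i, 0 ≤ μ i) (hsum : ∑' i, μ i = 1) :
    Tendsto (fun J => tailP μ J) atTop (nhds 0) := by
  have hμs := musummable hsum
  have hsplit : ∀ J, tailP μ J = 1 - ∑ k ∈ Finset.range J, μ k := by
    intro J
    have hd : Summable (fun k => if k < J then μ k else 0) := by
      apply summable_of_ne_finset_zero (s := Finset.range J)
      intro k hk
      rw [if_neg (by simpa using hk)]
    have hχ : Summable (fun k => μ k * chiJ J k) :=
      hμs.of_nonneg_of_le (fun k => mul_nonneg (hpos k) (chiJ_nonneg J k))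
        (fun k => by nlinarith [hpos k, chiJ_nonneg J k, chiJ_le_one J k, hpos k])
    have hpoint : ∀ k, μ k * chiJ J k + (if k < J then μ k else 0) = μ k := by
      intro k
      rw [chiJ_eq_ite]
      rcases le_or_gt J k with h | h
      · rw [if_pos h, if_neg (by omega)]; ring
      · rw [if_neg (by omega), if_pos h]; ring
    have hsum2 : tailP μ J + ∑' k, (if k < J then μ k else 0) = 1 := by
      rw [tailP, ← Summable.tsum_add hχ hd, tsum_congr hpoint, hsum]
    have hfin : ∑' k, (if k < J then μ k else 0) = ∑ k ∈ Finset.range J, μ k := by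
      rw [tsum_eq_sum (s := Finset.range J) (fun k hk => if_neg (by simpa using hk))]
      exact Finset.sum_congr rfl fun k hk => if_pos (Finset.mem_range.1 hk)
    rw [hfin] at hsum2
    linarith
  have hpart : Tendsto (fun J => ∑ k ∈ Finset.range J, μ k) atTop (nhds 1) := by
    have := hμs.hasSum.tendsto_sum_nat
    rwa [hsum] at this
  rw [show (0:ℝ) = 1 - 1 by ring]
  simp_rw [hsplit]
  exact tendsto_const_nhds.sub hpart

/-- interpolation: from convergence along squares to an eventual upper bound along all m. -/
lemma interp (C : ℕ → ℕ) (hmono : Monotone C) (p ε : ℝ) (hε : 0 < ε)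
    (hconv : Tendsto (fun n : ℕ => ((C ((n+1)^2) : ℝ)) / (((n+1)^2 : ℕ) : ℝ))
      atTop (nhds p)) :
    ∀ᶠ m : ℕ in atTop, (C m : ℝ) / m ≤ p + ε := by
  have hratio : Tendsto (fun n : ℕ => (((n+1)^2 : ℕ) : ℝ) / ((n:ℝ)^2)) atTop (nhds 1) := by
    have h1 : Tendsto (fun n : ℕ => (1 + 1/(n:ℝ))^2) atTop (nhds 1) := by
      have := (tendsto_const_nhds (x := (1:ℝ)) (f := atTop)).add
        tendsto_one_div_atTop_nhds_zero_nat
      have h2 := this.pow 2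
      norm_num at h2
      simpa [one_div] using h2
    apply h1.congr'
    filter_upwards [eventually_ge_atTop 1] with n hn
    have hn0 : (n:ℝ) ≠ 0 := by positivity
    field_simp
    norm_cast
  have hg : Tendsto (fun n : ℕ => ((C ((n+1)^2) : ℝ)) / ((n:ℝ)^2)) atTop (nhds p) := by
    have := hconv.mul hratio
    rw [mul_one] at this
    apply this.congr'
    filter_upwards [eventually_ge_atTop 1] with n hn
    have hn0 : ((n:ℝ))^2 ≠ 0 := by positivity
    have hn1 : (((n+1)^2 : ℕ) : ℝ) ≠ 0 := by positivity
    field_simp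
  have hev : ∀ᶠ n : ℕ in atTop, ((C ((n+1)^2) : ℝ)) / ((n:ℝ)^2) ≤ p + ε :=
    hg.eventually (eventually_le_nhds (show p < p + ε by linarith))
  rw [eventually_atTop] at hev ⊢
  obtain ⟨N, hN⟩ := hev
  refine ⟨max ((N+1)^2) 1, fun m hm => ?_⟩
  have hm1 : 1 ≤ m := le_trans (le_max_right _ _) hm
  have hmN : (N+1)^2 ≤ m := le_trans (le_max_left _ _) hm
  set n := Nat.sqrt m with hn
  have hn1 : 1 ≤ n := by
    rw [hn]
    have := Nat.sqrt_le_sqrt hmN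
    calc 1 ≤ N + 1 := by omega
      _ = Nat.sqrt ((N+1)^2) := by rw [Nat.sqrt_eq']
      _ ≤ Nat.sqrt m := this
  have hnN : N ≤ n := by
    have := Nat.sqrt_le_sqrt hmN
    rw [hn]
    calc N ≤ N + 1 := by omega
      _ = Nat.sqrt ((N+1)^2) := by rw [Nat.sqrt_eq']
      _ ≤ Nat.sqrt m := this
  have hlow : n^2 ≤ m := by rw [hn]; exact Nat.sqrt_le' m
  have hhigh : m ≤ (n+1)^2 := by
    rw [hn]
    exact le_of_lt (by simpa [Nat.succ_eq_add_one] using Nat.lt_succ_sqrt' m)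
  have hCm : (C m : ℝ) ≤ (C ((n+1)^2) : ℝ) := by exact_mod_cast hmono hhigh
  have hm0 : (0:ℝ) < m := by exact_mod_cast hm1
  have hn0 : (0:ℝ) < ((n:ℝ))^2 := by
    have : (0:ℝ) < (n:ℝ) := by exact_mod_cast hn1
    positivity
  calc (C m : ℝ) / m ≤ (C ((n+1)^2) : ℝ) / ((n:ℝ)^2) := by
        apply div_le_div₀ (Nat.cast_nonneg _) hCm hn0
        exact_mod_cast hlow
    _ ≤ p + ε := hN n hnN

lemma sqrt_nat_tendsto : Tendsto (fun m : ℕ => Real.sqrt m) atTop atTop := by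
  apply tendsto_atTop_atTop.2
  intro b
  refine ⟨Nat.ceil (b^2), fun m hm => ?_⟩
  have h1 : (b^2 : ℝ) ≤ m := le_trans (Nat.le_ceil _) (by exact_mod_cast hm)
  rcases le_or_gt b 0 with hb | hb
  · exact le_trans hb (Real.sqrt_nonneg _)
  · rw [show b = Real.sqrt (b^2) by rw [Real.sqrt_sq hb.le]]
    exact Real.sqrt_le_sqrt h1

lemma J_div_sqrt_tendsto (J : ℕ) :
    Tendsto (fun m : ℕ => (J : ℝ) / Real.sqrt m) atTop (nhds 0) :=
  Tendsto.div_atTop tendsto_const_nhds sqrt_nat_tendsto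

lemma as_endgame {μ : ℕ → ℝ} (hpos : ∀ i, 0 ≤ μ i) (hsum : ∑' i, μ i = 1) (ω : ℕ → ℕ)
    (hconv : ∀ J : ℕ, Tendsto (fun n : ℕ =>
        (∑ t : Fin ((n+1)^2), chiJ J (ω (t : ℕ))) / (((n+1)^2 : ℕ) : ℝ))
      atTop (nhds (tailP μ J))) :
    Tendsto (fun m => Phi m (empMeas m (fun t : Fin m => ω (t : ℕ)))) atTop (nhds 0) := by
  rw [Metric.tendsto_atTop]
  intro ε hε
  obtain ⟨J, hJ⟩ := ((tailP_tendsto hpos hsum).eventually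
    (eventually_lt_nhds (show (0:ℝ) < ε/3 by linarith))).exists
  set C : ℕ → ℕ := fun m => ((Finset.range m).filter (fun t => J ≤ ω t)).card with hC
  have hrel : ∀ m, (∑ t : Fin m, chiJ J (ω (t : ℕ))) = (C m : ℝ) := by
    intro m
    rw [Fin.sum_univ_eq_sum_range (fun i => chiJ J (ω i)) m]
    simp [chiJ, Finset.sum_boole, hC]
  have hmono : Monotone C := fun a b hab =>
    Finset.card_le_card (Finset.filter_subset_filter _ (Finset.range_mono hab))
  have hconvC : Tendsto (fun n : ℕ => ((C ((n+1)^2) : ℝ)) / (((n+1)^2 : ℕ) : ℝ))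
      atTop (nhds (tailP μ J)) := by
    apply (hconv J).congr
    intro n
    rw [hrel]
  have hub := interp C hmono (tailP μ J) (ε/3) (by linarith) hconvC
  have hsq := (J_div_sqrt_tendsto J).eventually
    (eventually_lt_nhds (show (0:ℝ) < ε/3 by linarith))
  have hfinal : ∀ᶠ m : ℕ in atTop,
      dist (Phi m (empMeas m (fun t : Fin m => ω (t : ℕ)))) 0 < ε := by
    filter_upwards [hub, hsq, eventually_ge_atTop 1] with m hub1 hsq1 hm1
    rw [Real.dist_eq, sub_zero, abs_of_nonneg (Phi_nonneg m _)]
    have hb := Phi_le m hm1 (fun t : Fin m => ω (t : ℕ)) J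
    have : (∑ t : Fin m, (if J ≤ ω (t : ℕ) then (1:ℝ) else 0)) = (C m : ℝ) := by
      rw [← hrel m]
      exact Finset.sum_congr rfl fun t _ => by rw [chiJ_eq_ite]
    rw [this] at hb
    calc Phi m (empMeas m (fun t : Fin m => ω (t : ℕ)))
        ≤ (J : ℝ) / Real.sqrt m + (C m : ℝ) / m := hb
      _ ≤ (J : ℝ) / Real.sqrt m + (tailP μ J + ε/3) := by linarith
      _ < ε/3 + (ε/3 + ε/3) := by linarith
      _ = ε := by ring
  exact eventually_atTop.1 hfinal

lemma L1_tendsto {μ : ℕ → ℝ} (hpos : ∀ i, 0 ≤ μ i) (hsum : ∑' i, μ i = 1) :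
    Tendsto (fun m => expect μ m (fun x => Phi m (empMeas m x))) atTop (nhds 0) := by
  rw [Metric.tendsto_atTop]
  intro ε hε
  obtain ⟨J, hJ⟩ := ((tailP_tendsto hpos hsum).eventually
    (eventually_lt_nhds (show (0:ℝ) < ε/2 by linarith))).exists
  have key : ∀ m : ℕ, 1 ≤ m →
      expect μ m (fun x => Phi m (empMeas m x)) ≤ (J : ℝ) / Real.sqrt m + tailP μ J := by
    intro m hm
    have hm0 : (0:ℝ) < m := by exact_mod_cast hm
    have hw := real_W hpos hsum (m := m)
    have hN := mean_N hpos hsum J m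
    have hwnn : ∀ x : Fin m → ℕ, 0 ≤ ∏ t, μ (x t) :=
      fun x => Finset.prod_nonneg fun t _ => hpos (x t)
    set B : (Fin m → ℕ) → ℝ := fun x =>
      (∏ t, μ (x t)) * ((J : ℝ) / Real.sqrt m)
        + ((∏ t, μ (x t)) * (∑ t, chiJ J (x t))) * (1/m) with hB
    have hBsumm : Summable B := (hw.1.mul_right _).add (hN.1.mul_right _)
    have hle : ∀ x : Fin m → ℕ, (∏ t, μ (x t)) * Phi m (empMeas m x) ≤ B x := by
      intro x
      have hb := Phi_le m hm x J
      have hchi : (∑ t : Fin m, (if J ≤ x t then (1:ℝ) else 0)) = ∑ t, chiJ J (x t) :=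
        Finset.sum_congr rfl fun t _ => by rw [chiJ_eq_ite]
      rw [hchi] at hb
      calc (∏ t, μ (x t)) * Phi m (empMeas m x)
          ≤ (∏ t, μ (x t)) * ((J : ℝ) / Real.sqrt m + (∑ t, chiJ J (x t)) / m) :=
            mul_le_mul_of_nonneg_left hb (hwnn x)
        _ = B x := by rw [hB]; field_simp
    have hΦsumm : Summable (fun x : Fin m → ℕ => (∏ t, μ (x t)) * Phi m (empMeas m x)) :=
      Summable.of_nonneg_of_le (fun x => mul_nonneg (hwnn x) (Phi_nonneg m x)) hle hBsumm
    have hBsum : ∑' x, B x = (J : ℝ) / Real.sqrt m + tailP μ J := by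
      rw [hB, Summable.tsum_add (hw.1.mul_right _) (hN.1.mul_right _), tsum_mul_right, tsum_mul_right,
        hw.2, hN.2]
      field_simp
    calc expect μ m (fun x => Phi m (empMeas m x))
        ≤ ∑' x, B x := Summable.tsum_le_tsum hle hΦsumm hBsumm
      _ = (J : ℝ) / Real.sqrt m + tailP μ J := hBsum
  have hsq := (J_div_sqrt_tendsto J).eventually
    (eventually_lt_nhds (show (0:ℝ) < ε/2 by linarith))
  have hfinal : ∀ᶠ m : ℕ in atTop,
      dist (expect μ m (fun x => Phi m (empMeas m x))) 0 < ε := by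
    filter_upwards [hsq, eventually_ge_atTop 1] with m hsq1 hm1
    have hnn : 0 ≤ expect μ m (fun x => Phi m (empMeas m x)) :=
      tsum_nonneg fun x =>
        mul_nonneg (Finset.prod_nonneg fun t _ => hpos (x t)) (Phi_nonneg m x)
    rw [Real.dist_eq, sub_zero, abs_of_nonneg hnn]
    calc expect μ m (fun x => Phi m (empMeas m x))
        ≤ (J : ℝ) / Real.sqrt m + tailP μ J := key m hm1
      _ < ε/2 + ε/2 := by linarith
      _ = ε := by ring
  exact eventually_atTop.1 hfinal


/-- for every probability distribution `μ` on ℕ, the statistic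
`Φ_m(μ̂_m)` computed from the first `m` terms of an i.i.d. sequence `X_1, X_2, … ~ μ`
converges to `0` in `L¹` (i.e. its expectation under `μ^m` tends to `0`) and
almost surely (under any probability measure `P` on `ℕ^ℕ` whose finite-dimensional
marginals are those of the i.i.d. product). -/
theorem Phi_tendsto_zero (μ : ℕ → ℝ) (hμ : IsProb μ)
    (P : Measure (ℕ → ℕ)) (hP : IsProbabilityMeasure P)
    (hcyl : ∀ (m : ℕ) (y : Fin m → ℕ),
      P {ω | ∀ t : Fin m, ω (t : ℕ) = y t} = ENNReal.ofReal (∏ t, μ (y t))) :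
    Filter.Tendsto (fun m => expect μ m (fun x => Phi m (empMeas m x)))
      Filter.atTop (nhds 0) ∧
    ∀ᵐ ω ∂P, Filter.Tendsto (fun m => Phi m (empMeas m (fun t : Fin m => ω (t : ℕ))))
      Filter.atTop (nhds 0) := by
  constructor
  · exact L1_tendsto hμ.1 hμ.2
  · have hconvs : ∀ᵐ ω ∂P, ∀ J k : ℕ, ∀ᶠ n : ℕ in Filter.atTop,
        |(∑ t : Fin ((n+1)^2), chiJ J (ω (t : ℕ))) / (((n+1)^2 : ℕ) : ℝ) - tailP μ J|
          < 1/((k:ℝ)+1) := by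
      rw [MeasureTheory.ae_all_iff]
      intro J
      rw [MeasureTheory.ae_all_iff]
      intro k
      exact bc_step μ hμ.1 hμ.2 P hP hcyl J (1/((k:ℝ)+1)) (by positivity)
    filter_upwards [hconvs] with ω hω
    apply as_endgame hμ.1 hμ.2 ω
    intro J
    rw [Metric.tendsto_atTop]
    intro ε hε
    obtain ⟨k, hk⟩ := exists_nat_one_div_lt hε
    obtain ⟨N, hN⟩ := Filter.eventually_atTop.1 (hω J k)
    refine ⟨N, fun n hn => ?_⟩
    rw [Real.dist_eq]
    exact lt_trans (hN n hn) hk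
end

section
/- For any sequence of reals 1 > r_1 > r_2 > ... strictly decreasing to 0, there exists a probability distribution μ on ℕ such that for all m ≥ 1, the expected total variation risk of the empirical measure satisfies 2·E_{X ~ μ^m}[‖μ − μ̂_m‖_TV] > r_m; that is, the convergence of the TV risk to 0 can be arbitrarily slow. -/
open scoped BigOperators ENNReal

lemma ennreal_pi_tsum (m : ℕ) (G : ℕ → ℝ≥0∞) :
    ∑' x : Fin m → ℕ, ∏ t, G (x t) = (∑' j, G j) ^ m := by
  induction m with
  | zero =>
      rw [tsum_eq_single (default : Fin 0 → ℕ)]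
      · simp
      · intro b hb; exact absurd (Subsingleton.elim b default) hb
  | succ m ih =>
      rw [← Equiv.tsum_eq (Fin.consEquiv fun _ => ℕ)]
      have : ∀ p : ℕ × (Fin m → ℕ),
          (∏ t : Fin (m+1), G ((Fin.consEquiv fun _ => ℕ) (p.1, p.2) t))
            = G p.1 * ∏ t : Fin m, G (p.2 t) := by
        intro p
        rw [Fin.prod_univ_succ]
        simp [Fin.consEquiv]
      calc ∑' p : ℕ × (Fin m → ℕ), ∏ t : Fin (m+1), G ((Fin.consEquiv fun _ => ℕ) p t)
          = ∑' p : ℕ × (Fin m → ℕ), G p.1 * ∏ t : Fin m, G (p.2 t) := by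
            apply tsum_congr; intro p; exact this (p.1, p.2)
        _ = ∑' a : ℕ, ∑' b : Fin m → ℕ, G a * ∏ t : Fin m, G (b t) := ENNReal.tsum_prod (f := fun (a : ℕ) (b : Fin m → ℕ) => G a * ∏ t : Fin m, G (b t))
        _ = ∑' a : ℕ, G a * ∑' b : Fin m → ℕ, ∏ t : Fin m, G (b t) := by
            apply tsum_congr; intro a; exact ENNReal.tsum_mul_left
        _ = (∑' a : ℕ, G a) * (∑' j, G j) ^ m := by rw [ih, ENNReal.tsum_mul_right]
        _ = (∑' j, G j) ^ (m+1) := by rw [pow_succ]; ring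

lemma real_pi_summable (m : ℕ) (g : ℕ → ℝ) (hg : ∀ i, 0 ≤ g i) (hs : Summable g) :
    Summable (fun x : Fin m → ℕ => ∏ t, g (x t)) := by
  have key : ∑' x : Fin m → ℕ, ENNReal.ofReal (∏ t, g (x t))
      = (ENNReal.ofReal (∑' j, g j)) ^ m := by
    rw [ENNReal.ofReal_tsum_of_nonneg hg hs,
      ← ennreal_pi_tsum m (fun j => ENNReal.ofReal (g j))]
    exact tsum_congr fun x => ENNReal.ofReal_prod_of_nonneg fun t _ => hg (x t)
  have hne : ∑' x : Fin m → ℕ, ENNReal.ofReal (∏ t, g (x t)) ≠ ⊤ := by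
    rw [key]; exact ENNReal.pow_ne_top ENNReal.ofReal_ne_top
  have := ENNReal.summable_toReal hne
  convert this using 2 with x
  rw [ENNReal.toReal_ofReal (Finset.prod_nonneg fun t _ => hg (x t))]

lemma real_pi_tsum (m : ℕ) (g : ℕ → ℝ) (hg : ∀ i, 0 ≤ g i) (hs : Summable g) :
    ∑' x : Fin m → ℕ, ∏ t, g (x t) = (∑' j, g j) ^ m := by
  have hsum := real_pi_summable m g hg hs
  have key : ENNReal.ofReal (∑' x : Fin m → ℕ, ∏ t, g (x t))
      = ENNReal.ofReal ((∑' j, g j) ^ m) := by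
    rw [ENNReal.ofReal_tsum_of_nonneg (fun x => Finset.prod_nonneg fun t _ => hg (x t)) hsum,
      ENNReal.ofReal_pow (tsum_nonneg hg),
      ENNReal.ofReal_tsum_of_nonneg hg hs,
      ← ennreal_pi_tsum m (fun j => ENNReal.ofReal (g j))]
    exact tsum_congr fun x => ENNReal.ofReal_prod_of_nonneg fun t _ => hg (x t)
  exact (ENNReal.ofReal_eq_ofReal_iff
    (tsum_nonneg fun x => Finset.prod_nonneg fun t _ => hg (x t))
    (pow_nonneg (tsum_nonneg hg) m)).mp key

lemma IsProb.summable {μ : ℕ → ℝ} (h : IsProb μ) : Summable μ := by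
  by_contra hc
  have h2 := h.2
  rw [tsum_eq_zero_of_not_summable hc] at h2
  exact one_ne_zero h2.symm

lemma empMeas_nonneg (m : ℕ) (x : Fin m → ℕ) (i : ℕ) : 0 ≤ empMeas m x i := by
  unfold empMeas; positivity

lemma empMeas_summable (m : ℕ) (x : Fin m → ℕ) : Summable (empMeas m x) := by
  apply summable_of_ne_finset_zero (s := Finset.image x Finset.univ)
  intro i hi
  unfold empMeas
  have : (Finset.univ.filter (fun t => x t = i)) = ∅ := by
    apply Finset.filter_false_of_mem
    intro t _ hxi
    exact hi (Finset.mem_image.mpr ⟨t, Finset.mem_univ t, hxi⟩)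
  rw [this]; simp

lemma empMeas_tsum_le (m : ℕ) (x : Fin m → ℕ) : ∑' i, empMeas m x i ≤ 1 := by
  rcases Nat.eq_zero_or_pos m with hm | hm
  · subst hm
    have : ∀ i, empMeas 0 x i = 0 := by intro i; unfold empMeas; simp
    simp [this]
  rw [tsum_eq_sum (s := Finset.image x Finset.univ) (fun i hi => by
    unfold empMeas
    rw [Finset.filter_false_of_mem (fun t _ hxi => hi (Finset.mem_image.mpr ⟨t, Finset.mem_univ t, hxi⟩))]
    simp)]
  unfold empMeas
  rw [← Finset.sum_div]
  rw [div_le_one (by exact_mod_cast hm)]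
  have := Finset.card_eq_sum_card_fiberwise (f := x) (s := Finset.univ) (t := Finset.image x Finset.univ)
    (fun t _ => Finset.mem_image.mpr ⟨t, Finset.mem_univ t, rfl⟩)
  rw [Finset.card_univ, Fintype.card_fin] at this
  rw [← Nat.cast_sum, ← this]

lemma abs_summable {μ : ℕ → ℝ} (hμ : IsProb μ) (m : ℕ) (x : Fin m → ℕ) :
    Summable (fun i => |μ i - empMeas m x i|) :=
  (hμ.summable.sub (empMeas_summable m x)).abs

lemma tv_nonneg {μ : ℕ → ℝ} (m : ℕ) (x : Fin m → ℕ) : 0 ≤ tvDist μ (empMeas m x) := by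
  unfold tvDist
  have : 0 ≤ ∑' i, |μ i - empMeas m x i| := tsum_nonneg fun i => abs_nonneg _
  linarith

lemma tv_le_one {μ : ℕ → ℝ} (hμ : IsProb μ) (m : ℕ) (x : Fin m → ℕ) :
    tvDist μ (empMeas m x) ≤ 1 := by
  unfold tvDist
  have h1 : ∑' i, |μ i - empMeas m x i| ≤ ∑' i, (μ i + empMeas m x i) := by
    apply Summable.tsum_le_tsum _ (abs_summable hμ m x) (hμ.summable.add (empMeas_summable m x))
    intro i
    rw [abs_sub_le_iff]
    constructor <;> [skip; skip] <;> nlinarith [hμ.1 i, empMeas_nonneg m x i]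
  rw [Summable.tsum_add hμ.summable (empMeas_summable m x), hμ.2] at h1
  have := empMeas_tsum_le m x
  linarith

lemma pointwise_bound {μ : ℕ → ℝ} (hμ : IsProb μ) (m : ℕ) (x : Fin m → ℕ) (B : Finset ℕ) :
    ∑ i ∈ B, (if ∀ t, x t ≠ i then μ i else 0) ≤ 2 * tvDist μ (empMeas m x) := by
  have h2 : 2 * tvDist μ (empMeas m x) = ∑' i, |μ i - empMeas m x i| := by
    unfold tvDist; ring
  rw [h2]
  calc ∑ i ∈ B, (if ∀ t, x t ≠ i then μ i else 0)
      ≤ ∑ i ∈ B, |μ i - empMeas m x i| := by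
        apply Finset.sum_le_sum
        intro i _
        by_cases h : ∀ t, x t ≠ i
        · rw [if_pos h]
          have he : empMeas m x i = 0 := by
            unfold empMeas
            rw [Finset.filter_false_of_mem (fun t _ hxi => h t hxi)]
            simp
          rw [he, sub_zero, abs_of_nonneg (hμ.1 i)]
        · rw [if_neg h]
          exact abs_nonneg _
    _ ≤ ∑' i, |μ i - empMeas m x i| :=
        Summable.sum_le_tsum B (fun i _ => abs_nonneg _) (abs_summable hμ m x)

lemma expect_lower {μ : ℕ → ℝ} (hμ : IsProb μ) (m : ℕ) (B : Finset ℕ) :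
    ∑ i ∈ B, μ i * (1 - μ i) ^ m ≤ 2 * expect μ m (fun x => tvDist μ (empMeas m x)) := by
  classical
  have hP : Summable (fun x : Fin m → ℕ => ∏ t, μ (x t)) :=
    real_pi_summable m μ hμ.1 hμ.summable
  have hPnn : ∀ x : Fin m → ℕ, 0 ≤ ∏ t, μ (x t) :=
    fun x => Finset.prod_nonneg fun t _ => hμ.1 (x t)
  have hitenn : ∀ (i : ℕ) (x : Fin m → ℕ), (0:ℝ) ≤ (if ∀ t, x t ≠ i then μ i else 0) := by
    intro i x; split
    · exact hμ.1 i
    · exact le_refl 0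
  have hitele : ∀ (i : ℕ) (x : Fin m → ℕ), (if ∀ t, x t ≠ i then μ i else 0) ≤ μ i := by
    intro i x; split
    · exact le_refl _
    · exact hμ.1 i
  have hterm : ∀ i : ℕ, ∑' x : Fin m → ℕ,
      (∏ t, μ (x t)) * (if ∀ t, x t ≠ i then μ i else 0) = μ i * (1 - μ i) ^ m := by
    intro i
    set ν : ℕ → ℝ := fun j => if j = i then 0 else μ j with hν
    have hνnn : ∀ j, 0 ≤ ν j := by
      intro j; simp only [hν]; split
      · exact le_refl 0
      · exact hμ.1 j
    have hνle : ∀ j, ν j ≤ μ j := by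
      intro j; simp only [hν]; split
      · exact hμ.1 j
      · exact le_refl _
    have hνs : Summable ν := Summable.of_nonneg_of_le hνnn hνle hμ.summable
    have hpt : ∀ x : Fin m → ℕ, (∏ t, μ (x t)) * (if ∀ t, x t ≠ i then μ i else 0)
        = μ i * ∏ t, ν (x t) := by
      intro x
      by_cases h : ∀ t, x t ≠ i
      · rw [if_pos h]
        have he : ∀ t : Fin m, ν (x t) = μ (x t) := by
          intro t; simp only [hν]; rw [if_neg (h t)]
        rw [Finset.prod_congr rfl (fun t _ => he t)]
        ring
      · rw [if_neg h]
        push_neg at h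
        obtain ⟨t0, ht0⟩ := h
        have hz : ν (x t0) = 0 := by simp only [hν]; rw [if_pos ht0]
        have hz2 : ∏ t, ν (x t) = 0 := Finset.prod_eq_zero (Finset.mem_univ t0) hz
        rw [hz2]
        ring
    have hsum1 : ∑' j, ν j = 1 - μ i := by
      have h1 := Summable.tsum_eq_add_tsum_ite hμ.summable i
      rw [hμ.2] at h1
      have : ∑' j, ν j = ∑' j, ite (j = i) 0 (μ j) := rfl
      rw [this]
      linarith
    calc ∑' x : Fin m → ℕ, (∏ t, μ (x t)) * (if ∀ t, x t ≠ i then μ i else 0)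
        = ∑' x : Fin m → ℕ, μ i * ∏ t, ν (x t) := tsum_congr hpt
      _ = μ i * ∑' x : Fin m → ℕ, ∏ t, ν (x t) := tsum_mul_left
      _ = μ i * (∑' j, ν j) ^ m := by rw [real_pi_tsum m ν hνnn hνs]
      _ = μ i * (1 - μ i) ^ m := by rw [hsum1]
  have hterm_summable : ∀ i : ℕ, Summable (fun x : Fin m → ℕ =>
      (∏ t, μ (x t)) * (if ∀ t, x t ≠ i then μ i else 0)) := by
    intro i
    apply Summable.of_nonneg_of_le
      (fun x => mul_nonneg (hPnn x) (hitenn i x))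
      (fun x => mul_le_mul_of_nonneg_left (hitele i x) (hPnn x))
      (hP.mul_right (μ i))
  have hg_summable : Summable (fun x : Fin m → ℕ =>
      ∑ i ∈ B, (∏ t, μ (x t)) * (if ∀ t, x t ≠ i then μ i else 0)) :=
    summable_sum (fun i _ => hterm_summable i)
  have hexp_summable : Summable (fun x : Fin m → ℕ =>
      (∏ t, μ (x t)) * tvDist μ (empMeas m x)) := by
    apply Summable.of_nonneg_of_le
      (fun x => mul_nonneg (hPnn x) (tv_nonneg m x))
      (fun x => mul_le_of_le_one_right (hPnn x) (tv_le_one hμ m x)) hP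
  have h2exp_summable : Summable (fun x : Fin m → ℕ =>
      (∏ t, μ (x t)) * (2 * tvDist μ (empMeas m x))) := by
    have := hexp_summable.mul_left 2
    apply Summable.congr this
    intro x; ring
  calc ∑ i ∈ B, μ i * (1 - μ i) ^ m
      = ∑ i ∈ B, ∑' x : Fin m → ℕ,
          (∏ t, μ (x t)) * (if ∀ t, x t ≠ i then μ i else 0) := by
        exact (Finset.sum_congr rfl (fun i _ => (hterm i).symm))
    _ = ∑' x : Fin m → ℕ, ∑ i ∈ B,
          (∏ t, μ (x t)) * (if ∀ t, x t ≠ i then μ i else 0) :=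
        (Summable.tsum_finsetSum (fun i _ => hterm_summable i)).symm
    _ ≤ ∑' x : Fin m → ℕ, (∏ t, μ (x t)) * (2 * tvDist μ (empMeas m x)) := by
        apply Summable.tsum_le_tsum _ hg_summable h2exp_summable
        intro x
        rw [← Finset.mul_sum]
        exact mul_le_mul_of_nonneg_left (pointwise_bound hμ m x B) (hPnn x)
    _ = 2 * expect μ m (fun x => tvDist μ (empMeas m x)) := by
        unfold expect
        rw [← tsum_mul_left]
        exact tsum_congr (fun x => by ring)

/-- for any sequence `1 > r_1 > r_2 > …` strictly decreasing to `0`,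
there exists a probability distribution `μ` on ℕ such that for all `m ≥ 1`,
`2 E_{X ~ μ^m}[‖μ - μ̂_m‖_TV] > r_m`: the TV risk can converge arbitrarily slowly. -/
theorem tv_risk_arbitrarily_slow (r : ℕ → ℝ) (hr1 : r 1 < 1)
    (hanti : ∀ m n : ℕ, 1 ≤ m → m < n → r n < r m)
    (hlim : Filter.Tendsto r Filter.atTop (nhds 0)) :
    ∃ μ : ℕ → ℝ, IsProb μ ∧ ∀ m : ℕ, 1 ≤ m →
      r m < 2 * expect μ m (fun x => tvDist μ (empMeas m x)) := by
  classical
  set δ : ℝ := min ((1 - r 1) / 2) (1 / 2) with hδdef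
  have hδpos : 0 < δ := lt_min (by linarith) (by norm_num)
  have hδhalf : δ ≤ 1 / 2 := min_le_right _ _
  have h1δ : (0:ℝ) < 1 - δ := by linarith
  have hr_le : ∀ m : ℕ, 1 ≤ m → r m < 1 - δ := by
    intro m hm
    have h1 : r m ≤ r 1 := by
      rcases eq_or_lt_of_le hm with h | h
      · rw [← h]
      · exact le_of_lt (hanti 1 m le_rfl h)
    have h2 : δ ≤ (1 - r 1) / 2 := min_le_left _ _
    linarith
  -- choose N
  have hNex : ∀ k : ℕ, ∃ N : ℕ, ∀ n ≥ N, r n < (1 - δ) * (1 / 2) ^ k := by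
    intro k
    have hpos : (0:ℝ) < (1 - δ) * (1 / 2) ^ k := by positivity
    have hev : ∀ᶠ n in Filter.atTop, r n < (1 - δ) * (1 / 2) ^ k :=
      hlim.eventually_lt_const hpos
    exact Filter.eventually_atTop.mp hev
  choose N hN using hNex
  -- define M
  set M : ℕ → ℕ := fun k => Nat.rec 1 (fun k ih => max (ih + 1) (N (k + 1))) k with hM
  have hM0 : M 0 = 1 := rfl
  have hMsucc : ∀ k, M (k + 1) = max (M k + 1) (N (k + 1)) := fun k => rfl
  have hMlt : ∀ k, M k < M (k + 1) := by
    intro k; rw [hMsucc]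
    exact lt_of_lt_of_le (Nat.lt_succ_self _) (le_max_left _ _)
  have hMmono : StrictMono M := strictMono_nat_of_lt_succ hMlt
  have hMge : ∀ k, k + 1 ≤ M k := by
    intro k
    induction k with
    | zero => exact le_refl 1
    | succ k ih =>
        have := hMlt k
        omega
  have hMr : ∀ k m, M k ≤ m → r m < (1 - δ) * (1 / 2) ^ k := by
    intro k m hkm
    cases k with
    | zero =>
        simp only [pow_zero, mul_one]
        exact hr_le m (hM0 ▸ hkm)
    | succ k =>
        apply hN
        have h1 : N (k + 1) ≤ M (k + 1) := by rw [hMsucc]; exact le_max_right _ _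
        exact le_trans h1 hkm
  -- block sizes
  set nb : ℕ → ℕ := fun j => ⌈(M (j + 1) : ℝ) / δ⌉₊ + 1 with hnb
  have hnb1 : ∀ j, 1 ≤ nb j := fun j => Nat.le_add_left 1 _
  have hnbpos : ∀ j, (0:ℝ) < nb j := fun j => by exact_mod_cast Nat.lt_of_lt_of_le Nat.zero_lt_one (hnb1 j)
  have hnbδ : ∀ j, (M (j + 1) : ℝ) ≤ δ * nb j := by
    intro j
    have h1 : (M (j + 1) : ℝ) / δ ≤ ⌈(M (j + 1) : ℝ) / δ⌉₊ := Nat.le_ceil _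
    have h2 : (⌈(M (j + 1) : ℝ) / δ⌉₊ : ℝ) ≤ nb j := by
      rw [hnb]; push_cast; linarith
    rw [div_le_iff₀ hδpos] at h1
    calc (M (j + 1) : ℝ) ≤ ⌈(M (j + 1) : ℝ) / δ⌉₊ * δ := h1
      _ ≤ nb j * δ := by nlinarith
      _ = δ * nb j := mul_comm _ _
  -- atom masses
  set c : ℕ → ℝ := fun j => (1 / 2) ^ (j + 1) / nb j with hc
  have hcnn : ∀ j, 0 ≤ c j := fun j => by positivity
  have hpow1 : ∀ j : ℕ, ((1:ℝ) / 2) ^ (j + 1) ≤ 1 :=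
    fun j => pow_le_one₀ (by norm_num) (by norm_num)
  have hpownn : ∀ j : ℕ, (0:ℝ) ≤ (1 / 2) ^ (j + 1) := fun j => by positivity
  have hcle : ∀ j, c j ≤ 1 / nb j := by
    intro j
    rw [hc]
    exact div_le_div_of_nonneg_right (hpow1 j) (le_of_lt (hnbpos j))
  -- the distribution
  set e : ℕ ≃ ℕ × ℕ := (Denumerable.eqv (ℕ × ℕ)).symm with he
  set ν : ℕ × ℕ → ℝ := fun p => if p.2 < nb p.1 then c p.1 else 0 with hν
  set μ : ℕ → ℝ := fun i => ν (e i) with hμdef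
  have hνnn : ∀ p, 0 ≤ ν p := by
    intro p; rw [hν]; dsimp only; split
    · exact hcnn p.1
    · exact le_refl 0
  have hfiber_summable : ∀ j, Summable (fun t => ν (j, t)) := by
    intro j
    apply summable_of_ne_finset_zero (s := Finset.range (nb j))
    intro t ht
    rw [hν]; dsimp only
    rw [if_neg (by simpa using ht)]
  have hfiber_tsum : ∀ j, ∑' t, ν (j, t) = (1 / 2) ^ (j + 1) := by
    intro j
    rw [tsum_eq_sum (s := Finset.range (nb j)) (fun t ht => by
      rw [hν]; dsimp only; rw [if_neg (by simpa using ht)])]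
    have : ∀ t ∈ Finset.range (nb j), ν (j, t) = c j := by
      intro t ht
      rw [hν]; dsimp only; rw [if_pos (Finset.mem_range.mp ht)]
    rw [Finset.sum_congr rfl this, Finset.sum_const, Finset.card_range, nsmul_eq_mul, hc]
    have := (hnbpos j).ne'
    field_simp
  have hq_summable : Summable (fun j : ℕ => ((1:ℝ) / 2) ^ (j + 1)) := by
    apply Summable.congr ((summable_geometric_of_lt_one (r := (1/2 : ℝ)) (by norm_num) (by norm_num)).mul_left (1/2))
    intro j
    rw [pow_succ]
    ring
  have hq_tsum : ∑' j : ℕ, ((1:ℝ) / 2) ^ (j + 1) = 1 := by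
    have h1 : ∑' j : ℕ, ((1:ℝ) / 2) ^ (j + 1) = (1/2) * ∑' j : ℕ, ((1:ℝ) / 2) ^ j := by
      rw [← tsum_mul_left]
      apply tsum_congr
      intro j
      rw [pow_succ]
      ring
    rw [h1, tsum_geometric_of_lt_one (r := (1/2 : ℝ)) (by norm_num) (by norm_num)]
    norm_num
  have hν_summable : Summable ν := by
    apply (summable_prod_of_nonneg hνnn).mpr
    constructor
    · exact fun j => hfiber_summable j
    · apply Summable.congr hq_summable
      intro j
      exact (hfiber_tsum j).symm
  have hν_tsum : ∑' p, ν p = 1 := by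
    rw [Summable.tsum_prod' hν_summable hfiber_summable]
    rw [tsum_congr hfiber_tsum, hq_tsum]
  have hprob : IsProb μ := by
    constructor
    · exact fun i => hνnn (e i)
    · rw [hμdef]
      rw [Equiv.tsum_eq e ν]
      exact hν_tsum
  refine ⟨μ, hprob, ?_⟩
  intro m hm
  -- find the stage k
  set F : Finset ℕ := (Finset.range (m + 1)).filter (fun j => M j ≤ m) with hF
  have hF0 : 0 ∈ F := by
    rw [hF]
    apply Finset.mem_filter.mpr
    refine ⟨Finset.mem_range.mpr (by omega), ?_⟩
    rw [hM0]; exact hm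
  have hFne : F.Nonempty := ⟨0, hF0⟩
  set k := F.max' hFne with hk
  have hkmem := F.max'_mem hFne
  have hk1 : M k ≤ m := (Finset.mem_filter.mp hkmem).2
  have hk2 : m < M (k + 1) := by
    by_contra h
    push_neg at h
    have hmem : k + 1 ∈ F := by
      rw [hF]
      apply Finset.mem_filter.mpr
      refine ⟨Finset.mem_range.mpr ?_, h⟩
      have := hMge (k + 1)
      omega
    have := F.le_max' _ hmem
    omega
  -- choose the last block K
  have hεpos : 0 < (1 - δ) * (1 / 2) ^ k - r m := by
    have := hMr k m hk1; linarith
  obtain ⟨K0, hK0⟩ := exists_pow_lt_of_lt_one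
    (show (0:ℝ) < ((1 - δ) * (1 / 2) ^ k - r m) / (1 - δ) by positivity)
    (show (1:ℝ)/2 < 1 by norm_num)
  set K := max k K0 with hK
  have hkK : k ≤ K := le_max_left _ _
  have hKbound : (1 - δ) * (1 / 2) ^ (K + 1) < (1 - δ) * (1 / 2) ^ k - r m := by
    have h1 : ((1:ℝ)/2) ^ (K + 1) ≤ (1/2) ^ K0 :=
      pow_le_pow_of_le_one (by norm_num) (by norm_num) (by omega)
    have h2 : (1 - δ) * (((1 - δ) * (1 / 2) ^ k - r m) / (1 - δ))
        = (1 - δ) * (1 / 2) ^ k - r m := by field_simp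
    nlinarith
  -- the block finset
  set S : Finset (ℕ × ℕ) := (Finset.Icc k K).biUnion (fun j => {j} ×ˢ Finset.range (nb j)) with hS
  set B : Finset ℕ := S.image e.symm with hB
  have hsum1 : ∑ i ∈ B, μ i * (1 - μ i) ^ m = ∑ p ∈ S, ν p * (1 - ν p) ^ m := by
    rw [hB, Finset.sum_image (fun p _ q _ h => e.symm.injective h)]
    apply Finset.sum_congr rfl
    intro p _
    rw [hμdef]
    dsimp only
    rw [Equiv.apply_symm_apply]
  have hdisj : (↑(Finset.Icc k K) : Set ℕ).PairwiseDisjoint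
      (fun j => {j} ×ˢ Finset.range (nb j)) := by
    intro a _ b _ hab
    apply Finset.disjoint_left.mpr
    intro p hpa hpb
    have h1 : p.1 = a := Finset.mem_singleton.mp (Finset.mem_product.mp hpa).1
    have h2 : p.1 = b := Finset.mem_singleton.mp (Finset.mem_product.mp hpb).1
    exact hab (h1 ▸ h2)
  have hsum2 : ∑ p ∈ S, ν p * (1 - ν p) ^ m
      = ∑ j ∈ Finset.Icc k K, ∑ p ∈ {j} ×ˢ Finset.range (nb j), ν p * (1 - ν p) ^ m := by
    rw [hS]
    exact Finset.sum_biUnion hdisj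
  have hsum3 : ∀ j, ∑ p ∈ {j} ×ˢ Finset.range (nb j), ν p * (1 - ν p) ^ m
      = (1/2) ^ (j+1) * (1 - c j) ^ m := by
    intro j
    rw [Finset.sum_product, Finset.sum_singleton]
    have hterm : ∀ t ∈ Finset.range (nb j),
        ν (j, t) * (1 - ν (j, t)) ^ m = c j * (1 - c j) ^ m := by
      intro t ht
      rw [hν]
      dsimp only
      rw [if_pos (Finset.mem_range.mp ht)]
    rw [Finset.sum_congr rfl hterm, Finset.sum_const, Finset.card_range, nsmul_eq_mul]
    have hnc : (nb j : ℝ) * c j = (1/2) ^ (j+1) := by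
      rw [hc]
      have := (hnbpos j).ne'
      field_simp
    rw [← mul_assoc, hnc]
  have hc2 : ∀ j, c j ≤ 1 := by
    intro j
    have h1 : (1:ℝ) ≤ nb j := by exact_mod_cast hnb1 j
    calc c j ≤ 1 / nb j := hcle j
      _ ≤ 1 := by rw [div_le_one (hnbpos j)]; exact h1
  have hblock : ∀ j ∈ Finset.Icc k K,
      (1 - δ) * (1/2) ^ (j+1) ≤ (1/2) ^ (j+1) * (1 - c j) ^ m := by
    intro j hj
    have hjk : k ≤ j := (Finset.mem_Icc.mp hj).1
    have hmM : (m : ℝ) ≤ M (j + 1) := by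
      have h := lt_of_lt_of_le hk2 (hMmono.monotone (by omega : k + 1 ≤ j + 1))
      exact_mod_cast le_of_lt h
    have hmc : (m:ℝ) * c j ≤ δ := by
      have h1 : (m:ℝ) * c j ≤ (M (j+1) : ℝ) * (1 / nb j) := by
        apply mul_le_mul hmM (hcle j) (hcnn j) (Nat.cast_nonneg _)
      have h2 : (M (j+1) : ℝ) * (1 / nb j) ≤ δ := by
        rw [mul_one_div, div_le_iff₀ (hnbpos j)]
        linarith [hnbδ j]
      linarith
    have hbern : 1 - (m:ℝ) * c j ≤ (1 - c j) ^ m := by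
      have h := one_add_mul_le_pow (a := -c j) (by linarith [hc2 j]) m
      have he1 : (1:ℝ) + -(c j) = 1 - c j := by ring
      rw [he1] at h
      calc 1 - (m:ℝ) * c j = 1 + m * (-c j) := by ring
        _ ≤ (1 - c j) ^ m := h
    have hfin : 1 - δ ≤ (1 - c j) ^ m := le_trans (by linarith) hbern
    calc (1 - δ) * (1/2) ^ (j+1) ≤ (1 - c j) ^ m * (1/2) ^ (j+1) :=
          mul_le_mul_of_nonneg_right hfin (hpownn j)
      _ = (1/2) ^ (j+1) * (1 - c j) ^ m := mul_comm _ _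
  have hgeom : ∀ K', k ≤ K' → ∑ j ∈ Finset.Icc k K', ((1:ℝ)/2) ^ (j+1)
      = (1/2) ^ k - (1/2) ^ (K'+1) := by
    intro K' hkK'
    induction K', hkK' using Nat.le_induction with
    | base =>
        rw [Finset.Icc_self, Finset.sum_singleton, pow_succ]
        ring
    | succ K' hkK' ih =>
        rw [Finset.sum_Icc_succ_top (by omega), ih]
        rw [pow_succ ((1:ℝ)/2) (K'+1)]
        ring
  calc r m < (1 - δ) * ((1/2) ^ k - (1/2) ^ (K+1)) := by
        rw [mul_sub]
        linarith
    _ = ∑ j ∈ Finset.Icc k K, (1 - δ) * (1/2) ^ (j+1) := by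
        rw [← Finset.mul_sum, hgeom K hkK]
    _ ≤ ∑ j ∈ Finset.Icc k K, (1/2) ^ (j+1) * (1 - c j) ^ m := Finset.sum_le_sum hblock
    _ = ∑ i ∈ B, μ i * (1 - μ i) ^ m := by
        rw [hsum1, hsum2]
        exact (Finset.sum_congr rfl (fun j _ => hsum3 j)).symm
    _ ≤ 2 * expect μ m (fun x => tvDist μ (empMeas m x)) := expect_lower hprob m B
end
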